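/- Let t be a positive integer and 0 < β < 1. There exist a constant c > 0 (depending only on β and t) and n₀ such that for every n ≥ n₀ the following holds: if G is a B_t-free graph on n vertices whose maximum degree Δ satisfies n/2 < Δ < βn, and G contains a triangle, then G has at most Δ(n−Δ) − c·n edges. -/

import Mathlib

open SimpleGraph

/-- The number of subgraphs of `G` isomorphic to `H`. -/
noncomputable def copyCount {α β : Type*} (H : SimpleGraph α) (G : SimpleGraph β) : ℕ :=
  Set.ncard {G' : G.Subgraph | Nonempty (H ≃g G'.coe)}

/-- `G` contains a subgraph isomorphic to `F`. -/
def Contains {α β : Type*} (F : SimpleGraph α) (G : SimpleGraph β) : Prop :=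
  ∃ f : F →g G, Function.Injective f

/-- The generalized Turán number `ex(n, H, F)`: the maximum number of subgraphs
isomorphic to `H` in an `F`-free graph on `n` vertices. -/
noncomputable def exGen {α β : Type*} (n : ℕ) (H : SimpleGraph α) (F : SimpleGraph β) : ℕ :=
  sSup {N | ∃ G : SimpleGraph (Fin n), ¬ Contains F G ∧ N = copyCount H G}

/-- The double star `S_{a,b}`: central edge `0-1`, vertices `2,…,a+1` are leaves
attached to `0`, and vertices `a+2,…,a+b+1` are leaves attached to `1`. -/
def doubleStar (a b : ℕ) : SimpleGraph (Fin (a + b + 2)) :=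
  SimpleGraph.fromRel (fun x y =>
    (x.val = 0 ∧ y.val = 1) ∨ (x.val = 0 ∧ 2 ≤ y.val ∧ y.val < a + 2) ∨
      (x.val = 1 ∧ a + 2 ≤ y.val))
/-- The book `B_t`: `t` triangles sharing a common edge; the common edge is `0-1` and
vertices `2,…,t+1` are the pages. -/
def book (t : ℕ) : SimpleGraph (Fin (t + 2)) :=
  SimpleGraph.fromRel (fun x y => x.val < 2 ∧ x ≠ y)

open Finset in
lemma book_adj {t : ℕ} (a b : Fin (t+2)) :
    (book t).Adj a b ↔ a ≠ b ∧ (a.val < 2 ∨ b.val < 2) := by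
  simp only [book, fromRel_adj]
  constructor
  · rintro ⟨h, h2 | h2⟩ <;> exact ⟨h, by tauto⟩
  · rintro ⟨h, h2 | h2⟩
    · exact ⟨h, Or.inl ⟨h2, h⟩⟩
    · exact ⟨h, Or.inr ⟨h2, h.symm⟩⟩

open Finset in
lemma bookfree_common {n t : ℕ} (G : SimpleGraph (Fin n)) [DecidableRel G.Adj]
    (hG : ¬ Contains (book t) G) {x y : Fin n} (hxy : G.Adj x y) :
    (G.neighborFinset x ∩ G.neighborFinset y).card ≤ t - 1 := by
  by_contra hc
  push_neg at hc
  have htle : t ≤ (G.neighborFinset x ∩ G.neighborFinset y).card := by omega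
  obtain ⟨s, hs, hscard⟩ := Finset.exists_subset_card_eq htle
  have hmem : ∀ i : Fin t, (s.orderIsoOfFin hscard i : Fin n) ∈
      G.neighborFinset x ∩ G.neighborFinset y := fun i => hs (s.orderIsoOfFin hscard i).2
  set f : Fin t → Fin n := fun i => (s.orderIsoOfFin hscard i : Fin n) with hf
  have hfinj : Function.Injective f := fun i j hij =>
    (s.orderIsoOfFin hscard).injective (Subtype.ext hij)
  have hfx : ∀ i, G.Adj x (f i) := fun i => by
    have := hmem i; rw [Finset.mem_inter, mem_neighborFinset, mem_neighborFinset] at this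
    exact this.1
  have hfy : ∀ i, G.Adj y (f i) := fun i => by
    have := hmem i; rw [Finset.mem_inter, mem_neighborFinset, mem_neighborFinset] at this
    exact this.2
  set g : Fin (t+2) → Fin n := fun i =>
    if h0 : i.val = 0 then x else if h1 : i.val = 1 then y
    else f ⟨i.val - 2, by omega⟩ with hg
  have hg0 : ∀ i : Fin (t+2), i.val = 0 → g i = x := fun i h => by
    simp only [hg]; rw [dif_pos h]
  have hg1 : ∀ i : Fin (t+2), i.val = 1 → g i = y := fun i h => by
    simp only [hg]; rw [dif_neg (by omega), dif_pos h]
  have hg2 : ∀ i : Fin (t+2), 2 ≤ i.val → ∀ (h : i.val - 2 < t), g i = f ⟨i.val - 2, h⟩ :=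
    fun i h _ => by
      simp only [hg]
      rw [dif_neg (by omega), dif_neg (by omega)]
  have key : ∀ a b : Fin (t+2), a.val < 2 → a ≠ b → G.Adj (g a) (g b) := by
    intro a b ha hne
    have hne' : a.val ≠ b.val := fun h => hne (Fin.ext h)
    rcases (show a.val = 0 ∨ a.val = 1 by omega) with h | h
    · rcases (show b.val = 1 ∨ 2 ≤ b.val by omega) with h' | h'
      · rw [hg0 a h, hg1 b h']; exact hxy
      · rw [hg0 a h, hg2 b h' (by omega)]; exact hfx _
    · rcases (show b.val = 0 ∨ 2 ≤ b.val by omega) with h' | h'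
      · rw [hg1 a h, hg0 b h']; exact hxy.symm
      · rw [hg1 a h, hg2 b h' (by omega)]; exact hfy _
  have hmap : ∀ {a b : Fin (t+2)}, (book t).Adj a b → G.Adj (g a) (g b) := by
    intro a b hab
    rw [book_adj] at hab
    obtain ⟨hne, hlt | hlt⟩ := hab
    · exact key a b hlt hne
    · exact (key b a hlt hne.symm).symm
  have hginj : Function.Injective g := by
    intro i j hij
    rcases (show i.val = 0 ∨ i.val = 1 ∨ 2 ≤ i.val by omega) with hi | hi | hi <;>
      rcases (show j.val = 0 ∨ j.val = 1 ∨ 2 ≤ j.val by omega) with hj | hj | hj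
    · exact Fin.ext (by omega)
    · rw [hg0 i hi, hg1 j hj] at hij; exact absurd hij hxy.ne
    · rw [hg0 i hi, hg2 j hj (by omega)] at hij; exact absurd hij (hfx _).ne
    · rw [hg1 i hi, hg0 j hj] at hij; exact absurd hij.symm hxy.ne
    · exact Fin.ext (by omega)
    · rw [hg1 i hi, hg2 j hj (by omega)] at hij; exact absurd hij (hfy _).ne
    · rw [hg2 i hi (by omega), hg0 j hj] at hij; exact absurd hij.symm (hfx _).ne
    · rw [hg2 i hi (by omega), hg1 j hj] at hij; exact absurd hij.symm (hfy _).ne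
    · rw [hg2 i hi (by omega), hg2 j hj (by omega)] at hij
      have := hfinj hij
      have := congrArg Fin.val this
      simp only [] at this
      exact Fin.ext (by omega)
  exact hG ⟨⟨g, fun {a b} h => hmap h⟩, hginj⟩

open Finset in
lemma pair_le_sum {α : Type*} [DecidableEq α] {s : Finset α} {f : α → ℕ} {a b : α}
    (ha : a ∈ s) (hb : b ∈ s) (hab : a ≠ b) : f a + f b ≤ ∑ i ∈ s, f i := by
  rw [← Finset.sum_pair hab]
  refine Finset.sum_le_sum_of_subset ?_
  intro x hx
  rcases Finset.mem_insert.mp hx with rfl | hx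
  · exact ha
  · rcases Finset.mem_singleton.mp hx with rfl; exact hb

open Finset in
lemma main_count {n t Δ : ℕ} (G : SimpleGraph (Fin n)) [DecidableRel G.Adj]
    (hbook : ¬ Contains (book t) G) (hdegle : ∀ w, (G.neighborFinset w).card ≤ Δ)
    (v : Fin n) (hv : (G.neighborFinset v).card = Δ)
    (a b c : Fin n) (hab : G.Adj a b) (hbc : G.Adj b c) (hac : G.Adj a c) :
    ∃ S S' m : ℕ,
      2 * G.edgeFinset.card + 2 * m = S + S' + 2 * (Δ * (n - Δ)) ∧
      S' ≤ m ∧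
      S * (n - Δ) ≤ (t - 1) * S + 2 * ((t - 1) * m) ∧
      (n - Δ ≤ m + (t - 1) ∨ Δ ≤ m + (t - 1)) := by
  classical
  set N : Finset (Fin n) := G.neighborFinset v with hN
  set M : Finset (Fin n) := Nᶜ with hM
  have hNcard : N.card = Δ := hv
  have hΔn : Δ ≤ n := by
    rw [← hNcard]
    simpa using Finset.card_le_univ N
  have hMcard : M.card = n - Δ := by
    rw [hM, Finset.card_compl, hNcard]
    simp
  -- basic partition fact
  have f1 : ∀ x : Fin n, (N ∩ G.neighborFinset x).card + (M ∩ G.neighborFinset x).card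
      = (G.neighborFinset x).card := by
    intro x
    have h1 : M ∩ G.neighborFinset x = G.neighborFinset x \ N := by
      ext u; simp only [hM, Finset.mem_inter, Finset.mem_compl, Finset.mem_sdiff]; tauto
    have h2 : N ∩ G.neighborFinset x = G.neighborFinset x ∩ N := Finset.inter_comm _ _
    rw [h1, h2, Finset.card_inter_add_card_sdiff]
  have f2 : ∀ (S : Finset (Fin n)) (x : Fin n),
      (S \ G.neighborFinset x).card + (S ∩ G.neighborFinset x).card = S.card :=
    fun S x => Finset.card_sdiff_add_card_inter S _
  -- cross double count
  have hcard_ite : ∀ (A : Finset (Fin n)) (x : Fin n),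
      (A ∩ G.neighborFinset x).card = ∑ u ∈ A, if G.Adj x u then 1 else 0 := by
    intro A x
    rw [← Finset.card_filter]
    congr 1
    ext u
    simp [mem_neighborFinset]
  have cross : ∑ x ∈ N, (M ∩ G.neighborFinset x).card
      = ∑ u ∈ M, (N ∩ G.neighborFinset u).card := by
    calc ∑ x ∈ N, (M ∩ G.neighborFinset x).card
        = ∑ x ∈ N, ∑ u ∈ M, if G.Adj x u then 1 else 0 :=
          Finset.sum_congr rfl fun x _ => hcard_ite M x
      _ = ∑ u ∈ M, ∑ x ∈ N, if G.Adj x u then 1 else 0 := Finset.sum_comm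
      _ = ∑ u ∈ M, (N ∩ G.neighborFinset u).card := by
          refine Finset.sum_congr rfl fun u _ => ?_
          rw [hcard_ite N u]
          exact Finset.sum_congr rfl fun x _ => if_congr (G.adj_comm x u) rfl rfl
  set m1 : ℕ := ∑ x ∈ N, (M \ G.neighborFinset x).card with hm1
  set m2 : ℕ := ∑ u ∈ M, (N \ G.neighborFinset u).card with hm2
  have f5a : m1 + ∑ x ∈ N, (M ∩ G.neighborFinset x).card = Δ * M.card := by
    rw [hm1, ← Finset.sum_add_distrib]
    rw [Finset.sum_congr rfl fun x _ => f2 M x, Finset.sum_const, smul_eq_mul, hNcard]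
  have f5b : m2 + ∑ u ∈ M, (N ∩ G.neighborFinset u).card = Δ * M.card := by
    rw [hm2, ← Finset.sum_add_distrib]
    rw [Finset.sum_congr rfl fun u _ => f2 N u, Finset.sum_const, smul_eq_mul, hNcard,
      Nat.mul_comm]
  have f5 : m1 = m2 := by omega
  have f6 : ∀ x ∈ N, (N ∩ G.neighborFinset x).card ≤ t - 1 := by
    intro x hx
    have hadj : G.Adj v x := (mem_neighborFinset G v x).mp hx
    exact bookfree_common G hbook hadj
  have f7 : ∀ x ∈ N, ∀ y ∈ N, G.Adj x y →
      M.card ≤ (M \ G.neighborFinset x).card + (M \ G.neighborFinset y).card + (t - 1) := by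
    intro x _ y _ hxy
    have hint : ((M ∩ G.neighborFinset x) ∩ (M ∩ G.neighborFinset y)).card ≤ t - 1 := by
      refine le_trans (Finset.card_le_card ?_) (bookfree_common G hbook hxy)
      intro u hu
      simp only [Finset.mem_inter] at hu ⊢
      exact ⟨hu.1.2, hu.2.2⟩
    have hun : ((M ∩ G.neighborFinset x) ∪ (M ∩ G.neighborFinset y)).card ≤ M.card := by
      refine Finset.card_le_card ?_
      intro u hu
      rcases Finset.mem_union.mp hu with h | h
      · exact (Finset.mem_inter.mp h).1
      · exact (Finset.mem_inter.mp h).1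
    have huni := Finset.card_union_add_card_inter (M ∩ G.neighborFinset x)
      (M ∩ G.neighborFinset y)
    have e1 := f2 M x
    have e2 := f2 M y
    omega
  have f8 : ∀ u w : Fin n, G.Adj u w →
      Δ ≤ (N \ G.neighborFinset u).card + (N \ G.neighborFinset w).card + (t - 1) := by
    intro u w huw
    have hint : ((N ∩ G.neighborFinset u) ∩ (N ∩ G.neighborFinset w)).card ≤ t - 1 := by
      refine le_trans (Finset.card_le_card ?_) (bookfree_common G hbook huw)
      intro z hz
      simp only [Finset.mem_inter] at hz ⊢
      exact ⟨hz.1.2, hz.2.2⟩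
    have hun : ((N ∩ G.neighborFinset u) ∪ (N ∩ G.neighborFinset w)).card ≤ N.card := by
      refine Finset.card_le_card ?_
      intro z hz
      rcases Finset.mem_union.mp hz with h | h
      · exact (Finset.mem_inter.mp h).1
      · exact (Finset.mem_inter.mp h).1
    have huni := Finset.card_union_add_card_inter (N ∩ G.neighborFinset u)
      (N ∩ G.neighborFinset w)
    have e1 := f2 N u
    have e2 := f2 N w
    omega
  have f9 : ∀ u : Fin n, (M ∩ G.neighborFinset u).card ≤ (N \ G.neighborFinset u).card := by
    intro u
    have h1 := f1 u
    have h2 := f2 N u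
    have h3 := hdegle u
    omega
  set Sn : ℕ := ∑ x ∈ N, (N ∩ G.neighborFinset x).card with hSn
  set S' : ℕ := ∑ u ∈ M, (M ∩ G.neighborFinset u).card with hS'
  have f13 : S' ≤ m2 := Finset.sum_le_sum fun u _ => f9 u
  -- main identity
  have sum_deg : ∑ w, (G.neighborFinset w).card = 2 * G.edgeFinset.card := by
    simpa using G.sum_degrees_eq_twice_card_edges
  have split : (∑ x ∈ N, (G.neighborFinset x).card) + (∑ u ∈ M, (G.neighborFinset u).card)
      = 2 * G.edgeFinset.card := by
    rw [← sum_deg, hM]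
    exact Finset.sum_add_sum_compl N _
  have splitN : ∑ x ∈ N, (G.neighborFinset x).card
      = Sn + ∑ x ∈ N, (M ∩ G.neighborFinset x).card := by
    rw [hSn, ← Finset.sum_add_distrib]
    exact Finset.sum_congr rfl fun x _ => (f1 x).symm
  have splitM : ∑ u ∈ M, (G.neighborFinset u).card
      = (∑ u ∈ M, (N ∩ G.neighborFinset u).card) + S' := by
    rw [hS', ← Finset.sum_add_distrib]
    exact Finset.sum_congr rfl fun u _ => (f1 u).symm
  have A1 : 2 * G.edgeFinset.card + 2 * m1 = Sn + S' + 2 * (Δ * (n - Δ)) := by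
    rw [← hMcard]
    omega
  -- double sum bound
  have hPfilter : ∀ x : Fin n, N ∩ G.neighborFinset x = N.filter (fun y => G.Adj x y) := by
    intro x
    ext y
    simp [mem_neighborFinset, Finset.mem_filter, G.adj_comm]
  have lower : Sn * M.card ≤
      (∑ x ∈ N, ∑ y ∈ N ∩ G.neighborFinset x,
        ((M \ G.neighborFinset x).card + (M \ G.neighborFinset y).card)) + Sn * (t - 1) := by
    rw [hSn, Finset.sum_mul, Finset.sum_mul, ← Finset.sum_add_distrib]
    refine Finset.sum_le_sum fun x hx => ?_
    have h1 : ∀ y ∈ N ∩ G.neighborFinset x, M.card ≤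
        (M \ G.neighborFinset x).card + (M \ G.neighborFinset y).card + (t - 1) := by
      intro y hy
      rcases Finset.mem_inter.mp hy with ⟨hyN, hyx⟩
      exact f7 x hx y hyN ((mem_neighborFinset G x y).mp hyx)
    calc (N ∩ G.neighborFinset x).card * M.card
        = ∑ y ∈ N ∩ G.neighborFinset x, M.card := by
          rw [Finset.sum_const, smul_eq_mul]
      _ ≤ ∑ y ∈ N ∩ G.neighborFinset x,
            ((M \ G.neighborFinset x).card + (M \ G.neighborFinset y).card + (t - 1)) :=
          Finset.sum_le_sum h1
      _ = (∑ y ∈ N ∩ G.neighborFinset x,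
            ((M \ G.neighborFinset x).card + (M \ G.neighborFinset y).card))
            + (N ∩ G.neighborFinset x).card * (t - 1) := by
          rw [Finset.sum_add_distrib, Finset.sum_const, smul_eq_mul]
  have u1 : ∑ x ∈ N, ∑ _y ∈ N ∩ G.neighborFinset x, (M \ G.neighborFinset x).card
      ≤ (t - 1) * m1 := by
    rw [hm1, Finset.mul_sum]
    refine Finset.sum_le_sum fun x hx => ?_
    rw [Finset.sum_const, smul_eq_mul]
    exact Nat.mul_le_mul_right _ (f6 x hx)
  have u2 : ∑ x ∈ N, ∑ y ∈ N ∩ G.neighborFinset x, (M \ G.neighborFinset y).card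
      ≤ (t - 1) * m1 := by
    have swap : ∑ x ∈ N, ∑ y ∈ N ∩ G.neighborFinset x, (M \ G.neighborFinset y).card
        = ∑ y ∈ N, (N ∩ G.neighborFinset y).card * (M \ G.neighborFinset y).card := by
      calc ∑ x ∈ N, ∑ y ∈ N ∩ G.neighborFinset x, (M \ G.neighborFinset y).card
          = ∑ x ∈ N, ∑ y ∈ N, if G.Adj x y then (M \ G.neighborFinset y).card else 0 := by
            refine Finset.sum_congr rfl fun x _ => ?_
            rw [hPfilter x, Finset.sum_filter]
        _ = ∑ y ∈ N, ∑ x ∈ N, if G.Adj x y then (M \ G.neighborFinset y).card else 0 :=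
            Finset.sum_comm
        _ = ∑ y ∈ N, (N ∩ G.neighborFinset y).card * (M \ G.neighborFinset y).card := by
            refine Finset.sum_congr rfl fun y _ => ?_
            rw [← Finset.sum_filter]
            rw [Finset.sum_const, smul_eq_mul]
            congr 2
            rw [hPfilter y]
            ext x
            simp [Finset.mem_filter, G.adj_comm]
    rw [swap, hm1, Finset.mul_sum]
    refine Finset.sum_le_sum fun y hy => ?_
    exact Nat.mul_le_mul_right _ (f6 y hy)
  have A2 : Sn * (n - Δ) ≤ (t - 1) * Sn + 2 * ((t - 1) * m1) := by
    rw [← hMcard]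
    have hsplit : ∑ x ∈ N, ∑ y ∈ N ∩ G.neighborFinset x,
        ((M \ G.neighborFinset x).card + (M \ G.neighborFinset y).card)
        = (∑ x ∈ N, ∑ _y ∈ N ∩ G.neighborFinset x, (M \ G.neighborFinset x).card)
          + ∑ x ∈ N, ∑ y ∈ N ∩ G.neighborFinset x, (M \ G.neighborFinset y).card := by
      rw [← Finset.sum_add_distrib]
      exact Finset.sum_congr rfl fun x _ => Finset.sum_add_distrib
    have := lower
    rw [hsplit] at this
    have hc : Sn * (t - 1) = (t - 1) * Sn := Nat.mul_comm _ _
    omega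
  -- triangle gives close pair
  have A4 : n - Δ ≤ m1 + (t - 1) ∨ Δ ≤ m1 + (t - 1) := by
    have pairN : ∀ x y : Fin n, x ∈ N → y ∈ N → G.Adj x y → n - Δ ≤ m1 + (t - 1) := by
      intro x y hx hy hxy
      have h1 := f7 x hx y hy hxy
      have h2 : (M \ G.neighborFinset x).card + (M \ G.neighborFinset y).card ≤ m1 := by
        rw [hm1]
        exact pair_le_sum (f := fun z => (M \ G.neighborFinset z).card) hx hy hxy.ne
      omega
    have pairM : ∀ x y : Fin n, x ∈ M → y ∈ M → G.Adj x y → Δ ≤ m1 + (t - 1) := by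
      intro x y hx hy hxy
      have h1 := f8 x y hxy
      have h2 : (N \ G.neighborFinset x).card + (N \ G.neighborFinset y).card ≤ m2 := by
        rw [hm2]
        exact pair_le_sum (f := fun z => (N \ G.neighborFinset z).card) hx hy hxy.ne
      omega
    have hmem : ∀ x : Fin n, x ∉ N → x ∈ M := fun x hx => Finset.mem_compl.mpr hx
    by_cases ha : a ∈ N <;> by_cases hb : b ∈ N <;> by_cases hc : c ∈ N
    · exact Or.inl (pairN a b ha hb hab)
    · exact Or.inl (pairN a b ha hb hab)
    · exact Or.inl (pairN a c ha hc hac)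
    · exact Or.inr (pairM b c (hmem b hb) (hmem c hc) hbc)
    · exact Or.inl (pairN b c hb hc hbc)
    · exact Or.inr (pairM a c (hmem a ha) (hmem c hc) hac)
    · exact Or.inr (pairM a b (hmem a ha) (hmem b hb) hab)
    · exact Or.inr (pairM a b (hmem a ha) (hmem b hb) hab)
  exact ⟨Sn, S', m1, A1, f5 ▸ f13, A2, A4⟩

set_option maxHeartbeats 1000000 in
/-- for large `n`, a `B_t`-free graph on `n` vertices containing a triangle,
with maximum degree `Δ` satisfying `n/2 < Δ < βn`, has at most `Δ(n - Δ) - cn` edges. -/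
theorem book_free_triangle_edge_bound (t : ℕ) (ht : 0 < t) (β : ℝ)
    (hβ0 : 0 < β) (hβ1 : β < 1) :
    ∃ c : ℝ, 0 < c ∧ ∃ n₀ : ℕ, ∀ n ≥ n₀, ∀ G : SimpleGraph (Fin n), ∀ Δ : ℕ,
      ¬ Contains (book t) G →
      (∀ v, (G.neighborSet v).ncard ≤ Δ) →
      (∃ v, (G.neighborSet v).ncard = Δ) →
      (n : ℝ) / 2 < (Δ : ℝ) → (Δ : ℝ) < β * n →
      Contains (⊤ : SimpleGraph (Fin 3)) G →
      (G.edgeSet.ncard : ℝ) ≤ (Δ : ℝ) * ((n : ℝ) - (Δ : ℝ)) - c * n := by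
  classical
  set γ : ℝ := min (1 - β) (1 / 2) with hγdef
  have hγ0 : 0 < γ := lt_min (by linarith) (by norm_num)
  have hγβ : γ ≤ 1 - β := min_le_left _ _
  have hγh : γ ≤ 1 / 2 := min_le_right _ _
  clear_value γ
  refine ⟨γ / 8, by positivity, ⌈(16 * ((t : ℝ) + 1)) / γ⌉₊ + 1, ?_⟩
  intro n hn G Δ hbook hdegle hdegeq hlo hhi htri
  letI : DecidableRel G.Adj := Classical.decRel _
  have hn0 : 0 < n := lt_of_lt_of_le (Nat.succ_pos _) hn
  have hnR : (0 : ℝ) < n := by exact_mod_cast hn0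
  have hn16 : 16 * ((t : ℝ) + 1) ≤ γ * n := by
    have h1 : (16 * ((t : ℝ) + 1)) / γ ≤ ⌈(16 * ((t : ℝ) + 1)) / γ⌉₊ := Nat.le_ceil _
    have h2 : ((⌈(16 * ((t : ℝ) + 1)) / γ⌉₊ : ℝ)) ≤ n := by
      exact_mod_cast le_trans (Nat.le_succ _) hn
    rw [div_le_iff₀ hγ0] at h1
    calc 16 * ((t : ℝ) + 1) ≤ ⌈(16 * ((t : ℝ) + 1)) / γ⌉₊ * γ := h1
      _ ≤ n * γ := mul_le_mul_of_nonneg_right h2 hγ0.le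
      _ = γ * n := mul_comm _ _
  -- degree conversions
  have hdeg : ∀ w, (G.neighborSet w).ncard = (G.neighborFinset w).card := fun w => by
    rw [Set.ncard_eq_toFinset_card', neighborFinset_def]
  have hedge : G.edgeSet.ncard = G.edgeFinset.card := by
    rw [← coe_edgeFinset, Set.ncard_coe_finset]
  obtain ⟨v, hv⟩ := hdegeq
  rw [hdeg] at hv
  have hdegle' : ∀ w, (G.neighborFinset w).card ≤ Δ := fun w => by
    rw [← hdeg]; exact hdegle w
  -- triangle
  obtain ⟨f, finj⟩ := htri
  have h01 : ((⊤ : SimpleGraph (Fin 3)).Adj 0 1) := by decide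
  have h12 : ((⊤ : SimpleGraph (Fin 3)).Adj 1 2) := by decide
  have h02 : ((⊤ : SimpleGraph (Fin 3)).Adj 0 2) := by decide
  obtain ⟨S, S', m, A1, A3, A2, A4⟩ := main_count G hbook hdegle' v hv (f 0) (f 1) (f 2)
    (f.map_rel h01) (f.map_rel h12) (f.map_rel h02)
  -- to reals
  have hΔn : Δ ≤ n := by
    rw [← hv]
    simpa using Finset.card_le_univ (G.neighborFinset v)
  have ht1 : ((t - 1 : ℕ) : ℝ) = (t : ℝ) - 1 := by
    have : (1:ℕ) ≤ t := ht
    push_cast [Nat.cast_sub this]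
    ring
  have hnd : ((n - Δ : ℕ) : ℝ) = (n : ℝ) - Δ := by
    push_cast [Nat.cast_sub hΔn]
    ring
  have rA1 : 2 * (G.edgeFinset.card : ℝ) + 2 * m = S + S' + 2 * (Δ * ((n : ℝ) - (Δ : ℝ))) := by
    have := congrArg (fun k : ℕ => (k : ℝ)) A1
    push_cast [Nat.cast_sub hΔn] at this
    linarith [this]
  have rA2 : (S : ℝ) * ((n : ℝ) - (Δ : ℝ)) ≤ ((t : ℝ) - 1) * S + 2 * (((t : ℝ) - 1) * m) := by
    have := (Nat.cast_le (α := ℝ)).mpr A2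
    push_cast [Nat.cast_sub hΔn, Nat.cast_sub (ht : 1 ≤ t)] at this
    linarith [this]
  have rA3 : (S' : ℝ) ≤ m := by exact_mod_cast A3
  have rA4 : ((n : ℝ) - (Δ : ℝ)) ≤ (m : ℝ) + ((t : ℝ) - 1) ∨ (Δ : ℝ) ≤ (m : ℝ) + ((t : ℝ) - 1) := by
    rcases A4 with h | h
    · left
      have := (Nat.cast_le (α := ℝ)).mpr h
      push_cast [Nat.cast_sub hΔn, Nat.cast_sub (ht : 1 ≤ t)] at this
      linarith [this]
    · right
      have := (Nat.cast_le (α := ℝ)).mpr h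
      push_cast [Nat.cast_sub (ht : 1 ≤ t)] at this
      linarith [this]
  have hDγ : γ * n ≤ ((n : ℝ) - (Δ : ℝ)) := by
    have h1 : γ * n ≤ (1 - β) * n := mul_le_mul_of_nonneg_right hγβ hnR.le
    nlinarith [hhi]
  have hΔγ : γ * n ≤ (Δ : ℝ) := by
    have h1 : γ * n ≤ (1 / 2) * n := mul_le_mul_of_nonneg_right hγh hnR.le
    linarith [hlo]
  have hm0 : (0 : ℝ) ≤ m := Nat.cast_nonneg _
  have hS0 : (0 : ℝ) ≤ S := Nat.cast_nonneg _
  have hmlow : γ * n / 2 ≤ (m : ℝ) := by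
    rcases rA4 with h | h
    · linarith [hDγ, hn16]
    · linarith [hΔγ, hn16]
  have key : γ * n * S ≤ (γ * n / 8) * S + (γ * n / 4) * m := by
    have c1 : γ * n * (S : ℝ) ≤ ((n : ℝ) - (Δ : ℝ)) * S := mul_le_mul_of_nonneg_right hDγ hS0
    have c2 : ((t : ℝ) - 1) * S ≤ (γ * n / 8) * S := by
      refine mul_le_mul_of_nonneg_right ?_ hS0
      linarith [hn16]
    have c3 : (2 * ((t : ℝ) - 1)) * m ≤ (γ * n / 4) * m := by
      refine mul_le_mul_of_nonneg_right ?_ hm0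
      linarith [hn16]
    calc γ * n * (S : ℝ) ≤ ((n : ℝ) - (Δ : ℝ)) * S := c1
      _ = S * ((n : ℝ) - (Δ : ℝ)) := mul_comm _ _
      _ ≤ ((t : ℝ) - 1) * S + 2 * (((t : ℝ) - 1) * m) := rA2
      _ = ((t : ℝ) - 1) * S + (2 * ((t : ℝ) - 1)) * m := by ring
      _ ≤ (γ * n / 8) * S + (γ * n / 4) * m := add_le_add c2 c3
  have hs : (S : ℝ) ≤ m / 2 := by
    have h8 : 7 / 8 * (S : ℝ) - 1 / 4 * m ≤ 0 := by
      by_contra hpos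
      push_neg at hpos
      have hp : 0 < γ * n * (7 / 8 * (S : ℝ) - 1 / 4 * m) :=
        mul_pos (mul_pos hγ0 hnR) hpos
      nlinarith [key]
    linarith
  rw [hedge]
  linarith [rA1, rA3, hs, hmlow]
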